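/- Undirected cycle counterexample for constant 3: in the 4-cycle with unit edge weights (vertices 0,1,2,3, edges {0,1},{1,2},{2,3},{3,0}), every 3-subset of vertices lies on a common shortest path, but no shortest path contains all 4 vertices. Hence the constant 4 in Theorem 1.2 cannot be replaced by 3. -/

import Mathlib

/-- A walk in the undirected 4-cycle with unit weights: consecutive vertices
differ by ±1 in `ZMod 4`. -/
def c4Walk (l : List (ZMod 4)) : Prop :=
  l.Chain' (fun i j => j = i + 1 ∨ i = j + 1)

/-- `l` is a shortest path from `s` to `t` in the unit-weight 4-cycle
(the weight of a walk is its number of edges). -/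
def IsShortestC4Path (l : List (ZMod 4)) (s t : ZMod 4) : Prop :=
  c4Walk l ∧ l.head? = some s ∧ l.getLast? = some t ∧
    ∀ l' : List (ZMod 4), c4Walk l' → l'.head? = some s → l'.getLast? = some t →
      l.length ≤ l'.length

lemma min3 (s : ZMod 4) : ∀ (l : List (ZMod 4)), c4Walk l → l.head? = some s →
    l.getLast? = some (s + 2) → 3 ≤ l.length := by
  intro l hw h1 h2
  match l with
  | [] => simp at h1
  | [a] =>
    simp at h1 h2
    subst h1
    have h : (2 : ZMod 4) = 0 := by rwa [left_eq_add] at h2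
    exact absurd h (by decide)
  | [a, b] =>
    simp at h1 h2
    subst h1; subst h2
    replace hw := (List.isChain_cons_cons.1 hw).1
    rcases hw with h | h
    · have : (2 : ZMod 4) = 1 := by linear_combination h
      exact absurd this (by decide)
    · have : (3 : ZMod 4) = 0 := by linear_combination -h
      exact absurd this (by decide)
  | a :: b :: c :: rest => simp

/-- The canonical shortest path of length 2. -/
lemma mid_shortest (m : ZMod 4) :
    IsShortestC4Path [m + 1, m + 2, m + 3] (m + 1) (m + 3) := by
  refine ⟨?_, by simp, by simp, ?_⟩
  · refine List.isChain_cons_cons.2 ⟨Or.inl (by ring), List.isChain_cons_cons.2 ⟨Or.inl (by ring), ?_⟩⟩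
    exact List.isChain_singleton _
  · intro l' hw h1 h2
    have h2' : l'.getLast? = some ((m + 1) + 2) := by rw [h2]; ring_nf
    simpa using min3 (m + 1) l' hw h1 h2'

/-- There is a walk of length ≤ 3 between any two vertices. -/
lemma short_walk (s t : ZMod 4) :
    ∃ l : List (ZMod 4), c4Walk l ∧ l.head? = some s ∧ l.getLast? = some t ∧
      l.length ≤ 3 := by
  rcases (by decide : ∀ x : ZMod 4, x = 0 ∨ x = 1 ∨ x = 2 ∨ x = 3) (t - s) with h | h | h | h <;>
    have ht : t = s + (t - s) := by ring
  · rw [h] at ht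
    have hts : t = s := by rw [ht]; ring
    exact ⟨[s], List.isChain_singleton _, by simp, by simp [hts], by simp⟩
  · rw [h] at ht
    refine ⟨[s, t], ?_, by simp, by simp, by simp⟩
    exact List.isChain_cons_cons.2 ⟨Or.inl ht, List.isChain_singleton _⟩
  · rw [h] at ht
    refine ⟨[s, s + 1, t], ?_, by simp, by simp, by simp⟩
    refine List.isChain_cons_cons.2 ⟨Or.inl rfl, List.isChain_cons_cons.2 ⟨Or.inl ?_, List.isChain_singleton _⟩⟩
    rw [ht]; ring
  · rw [h] at ht
    refine ⟨[s, t], ?_, by simp, by simp, by simp⟩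
    refine List.isChain_cons_cons.2 ⟨Or.inr ?_, List.isChain_singleton _⟩
    have h4 : (4 : ZMod 4) = 0 := by decide
    rw [ht]; linear_combination -h4

theorem stmt_18 :
    (∀ S : Finset (ZMod 4), S.card = 3 →
      ∃ (s t : ZMod 4) (l : List (ZMod 4)), IsShortestC4Path l s t ∧ ∀ v ∈ S, v ∈ l) ∧
    ¬ ∃ (s t : ZMod 4) (l : List (ZMod 4)), IsShortestC4Path l s t ∧ ∀ v : ZMod 4, v ∈ l := by
  constructor
  · intro S hS
    -- there is a vertex not in S
    have hcompl : (Sᶜ : Finset (ZMod 4)).Nonempty := by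
      rw [← Finset.card_pos, Finset.card_compl, hS]
      simp
    obtain ⟨m, hm⟩ := hcompl
    rw [Finset.mem_compl] at hm
    refine ⟨m + 1, m + 3, [m + 1, m + 2, m + 3], mid_shortest m, ?_⟩
    intro v hv
    have hvm : v ≠ m := fun h => hm (h ▸ hv)
    rcases (by decide : ∀ x : ZMod 4, x = 0 ∨ x = 1 ∨ x = 2 ∨ x = 3) (v - m) with h | h | h | h <;>
      have ht : v = m + (v - m) := by ring
    all_goals rw [h] at ht
    · exact absurd (by rw [ht]; ring) hvm
    · simp [ht]
    · simp [ht]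
    · simp [ht]
  · rintro ⟨s, t, l, ⟨hw, h1, h2, hmin⟩, hall⟩
    obtain ⟨l', hw', h1', h2', hlen'⟩ := short_walk s t
    have h4 : 4 ≤ l.length := by
      have huniv : (Finset.univ : Finset (ZMod 4)) ⊆ l.toFinset := fun v _ => by
        simpa using hall v
      have := Finset.card_le_card huniv
      simp at this
      calc 4 = (Finset.univ : Finset (ZMod 4)).card := by simp
        _ ≤ l.toFinset.card := Finset.card_le_card huniv
        _ ≤ l.length := l.toFinset_card_le
    have := hmin l' hw' h1' h2'
    omega
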